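/- Let n be a positive integer and let H be a bipartite simple graph on n vertices with at least (1/4 − 2·10⁻¹⁴)·n² edges. Then H contains an induced subgraph on at least 0.999·n vertices whose minimum degree is at least 0.498·n. -/

import Mathlib

open SimpleGraph

set_option maxHeartbeats 2000000 in
theorem stmt17 :
    ∀ n : ℕ, 0 < n → ∀ H : SimpleGraph (Fin n),
      (∃ A : Set (Fin n), ∀ u v, H.Adj u v →
        (u ∈ A ∧ v ∉ A) ∨ (u ∉ A ∧ v ∈ A)) →
      ((1 / 4 - 2 / 10 ^ 14 : ℝ)) * (n : ℝ) ^ 2 ≤ (H.edgeSet.ncard : ℝ) →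
      ∃ S : Finset (Fin n), (0.999 : ℝ) * (n : ℝ) ≤ (S.card : ℝ) ∧
        ∀ v ∈ S, (0.498 : ℝ) * (n : ℝ) ≤ ({u | u ∈ S ∧ H.Adj v u}.ncard : ℝ) := by
  classical
  intro n hn H hbip he
  obtain ⟨A, hA⟩ := hbip
  have hn1 : (1:ℝ) ≤ (n:ℝ) := by exact_mod_cast hn
  have hnpos : (0:ℝ) < (n:ℝ) := by linarith
  -- edge count as edgeFinset
  have hecard : (H.edgeSet.ncard : ℝ) = (H.edgeFinset.card : ℝ) := by
    rw [Set.ncard_eq_toFinset_card']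
    exact congrArg (fun s : Finset _ => (s.card : ℝ)) (by ext; simp)
  rw [hecard] at he
  set e : ℝ := (H.edgeFinset.card : ℝ) with hedef
  -- the two sides
  set Af : Finset (Fin n) := Finset.univ.filter (fun v => v ∈ A) with hAf
  set Bf : Finset (Fin n) := Finset.univ.filter (fun v => ¬ v ∈ A) with hBf
  have hABn : Af.card + Bf.card = n := by
    have := Finset.card_filter_add_card_filter_not
      (s := (Finset.univ : Finset (Fin n))) (p := fun v => v ∈ A)
    simpa [hAf, hBf] using this
  set a : ℝ := (Af.card : ℝ) with ha
  set b : ℝ := (Bf.card : ℝ) with hb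
  have hab : a + b = (n:ℝ) := by rw [ha, hb]; exact_mod_cast hABn
  have ha0 : (0:ℝ) ≤ a := Nat.cast_nonneg _
  have hb0 : (0:ℝ) ≤ b := Nat.cast_nonneg _
  -- degree bounds on each side
  have hdegA : ∀ v ∈ Af, (H.degree v : ℝ) ≤ b := by
    intro v hv
    rw [hAf, Finset.mem_filter] at hv
    have hsub : H.neighborFinset v ⊆ Bf := by
      intro u hu
      rw [SimpleGraph.mem_neighborFinset] at hu
      rcases hA v u hu with ⟨h1, h2⟩ | ⟨h1, h2⟩
      · rw [hBf, Finset.mem_filter]; exact ⟨Finset.mem_univ u, h2⟩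
      · exact absurd hv.2 h1
    have h := Finset.card_le_card hsub
    rw [hb]
    exact_mod_cast h
  have hdegB : ∀ v ∈ Bf, (H.degree v : ℝ) ≤ a := by
    intro v hv
    rw [hBf, Finset.mem_filter] at hv
    have hsub : H.neighborFinset v ⊆ Af := by
      intro u hu
      rw [SimpleGraph.mem_neighborFinset] at hu
      rcases hA v u hu with ⟨h1, h2⟩ | ⟨h1, h2⟩
      · exact absurd h1 hv.2
      · rw [hAf, Finset.mem_filter]; exact ⟨Finset.mem_univ u, h2⟩
    have h := Finset.card_le_card hsub
    rw [ha]
    exact_mod_cast h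
  -- sum of degrees
  have hsum : ∑ v, H.degree v = 2 * H.edgeFinset.card := H.sum_degrees_eq_twice_card_edges
  have hsumR : ∑ v, (H.degree v : ℝ) = 2 * e := by
    rw [hedef]
    have := congrArg (fun m : ℕ => (m : ℝ)) hsum
    push_cast at this
    exact this
  have hsplitAB : ∑ v ∈ Af, (H.degree v : ℝ) + ∑ v ∈ Bf, (H.degree v : ℝ)
      = ∑ v, (H.degree v : ℝ) := by
    rw [hAf, hBf]
    exact Finset.sum_filter_add_sum_filter_not _ _ _
  have hSA : ∑ v ∈ Af, (H.degree v : ℝ) ≤ a * b := by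
    calc ∑ v ∈ Af, (H.degree v : ℝ) ≤ ∑ _v ∈ Af, b := Finset.sum_le_sum hdegA
      _ = a * b := by rw [Finset.sum_const, nsmul_eq_mul, ha]
  have hSB : ∑ v ∈ Bf, (H.degree v : ℝ) ≤ b * a := by
    calc ∑ v ∈ Bf, (H.degree v : ℝ) ≤ ∑ _v ∈ Bf, a := Finset.sum_le_sum hdegB
      _ = b * a := by rw [Finset.sum_const, nsmul_eq_mul, hb]
  have heab : e ≤ a * b := by nlinarith [hsplitAB, hsumR, hSA, hSB]
  have habn : a * b ≤ (n:ℝ)^2 / 4 := by nlinarith [sq_nonneg (a - b), hab]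
  -- both sides are large
  have hdiff : (a - b)^2 ≤ ((0.0002:ℝ) * (n:ℝ))^2 := by nlinarith [heab, he, hab]
  have hd1 : a - b ≤ (0.0002:ℝ) * (n:ℝ) := by
    nlinarith [hdiff, hnpos, sq_nonneg (a - b - 0.0002*(n:ℝ))]
  have hd2 : b - a ≤ (0.0002:ℝ) * (n:ℝ) := by
    nlinarith [hdiff, hnpos, sq_nonneg (b - a - 0.0002*(n:ℝ))]
  have hage : (0.4999:ℝ) * (n:ℝ) ≤ a := by linarith [hd2, hab]
  have hbge : (0.4999:ℝ) * (n:ℝ) ≤ b := by linarith [hd1, hab]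
  -- high/low degree vertices
  set p : Fin n → Prop := fun v => (0.499:ℝ)*(n:ℝ) ≤ (H.degree v : ℝ) with hp
  set S : Finset (Fin n) := Finset.univ.filter p with hSdef
  set T : Finset (Fin n) := Finset.univ.filter (fun v => ¬ p v) with hTdef
  have hST : S.card + T.card = n := by
    have := Finset.card_filter_add_card_filter_not
      (s := (Finset.univ : Finset (Fin n))) (p := p)
    simpa [hSdef, hTdef] using this
  -- count low-degree vertices on one side
  have hlowside : ∀ (C : Finset (Fin n)) (c d : ℝ), (C.card : ℝ) = c →
      (∀ v ∈ C, (H.degree v : ℝ) ≤ d) →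
      2 * e - a * b ≤ ∑ v ∈ C, (H.degree v : ℝ) →
      ((C.filter (fun v => ¬ p v)).card : ℝ) * (d - 0.499*(n:ℝ)) ≤ c * d - (2 * e - a * b) := by
    intro C c d hc hd hlb
    have hsplitC : ∑ v ∈ C.filter p, (H.degree v : ℝ)
        + ∑ v ∈ C.filter (fun v => ¬ p v), (H.degree v : ℝ)
        = ∑ v ∈ C, (H.degree v : ℝ) := Finset.sum_filter_add_sum_filter_not _ _ _
    have hcards : (C.filter p).card + (C.filter (fun v => ¬ p v)).card = C.card :=
      Finset.card_filter_add_card_filter_not _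
    have hcardsR : ((C.filter p).card : ℝ) + ((C.filter (fun v => ¬ p v)).card : ℝ) = c := by
      rw [← hc]; exact_mod_cast hcards
    have hs1 : ∑ v ∈ C.filter p, (H.degree v : ℝ) ≤ ((C.filter p).card : ℝ) * d := by
      calc ∑ v ∈ C.filter p, (H.degree v : ℝ) ≤ ∑ _v ∈ C.filter p, d :=
            Finset.sum_le_sum (fun v hv => hd v (Finset.filter_subset _ _ hv))
        _ = _ := by rw [Finset.sum_const, nsmul_eq_mul]
    have hs2 : ∑ v ∈ C.filter (fun v => ¬ p v), (H.degree v : ℝ)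
        ≤ ((C.filter (fun v => ¬ p v)).card : ℝ) * (0.499*(n:ℝ)) := by
      calc ∑ v ∈ C.filter (fun v => ¬ p v), (H.degree v : ℝ)
          ≤ ∑ _v ∈ C.filter (fun v => ¬ p v), 0.499*(n:ℝ) := by
            apply Finset.sum_le_sum
            intro v hv
            rw [Finset.mem_filter] at hv
            exact le_of_lt (lt_of_not_ge hv.2)
        _ = _ := by rw [Finset.sum_const, nsmul_eq_mul]
    have hmul : (((C.filter p).card : ℝ) + ((C.filter (fun v => ¬ p v)).card : ℝ)) * d = c * d := by
      rw [hcardsR]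
    linarith [hsplitC, hs1, hs2, hlb, hmul,
      mul_comm (((C.filter p).card : ℝ)) d]
  -- lower bounds for the side sums
  have hlbA : 2 * e - a * b ≤ ∑ v ∈ Af, (H.degree v : ℝ) := by
    linarith [hsplitAB, hsumR, hSB]
  have hlbB : 2 * e - a * b ≤ ∑ v ∈ Bf, (H.degree v : ℝ) := by
    linarith [hsplitAB, hsumR, hSA]
  have hkA := hlowside Af a b rfl hdegA hlbA
  have hkB := hlowside Bf b a rfl hdegB hlbB
  set kA : ℝ := ((Af.filter (fun v => ¬ p v)).card : ℝ) with hkAdef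
  set kB : ℝ := ((Bf.filter (fun v => ¬ p v)).card : ℝ) with hkBdef
  have hkA0 : (0:ℝ) ≤ kA := Nat.cast_nonneg _
  have hkB0 : (0:ℝ) ≤ kB := Nat.cast_nonneg _
  -- kA, kB are tiny
  have hkA' : kA ≤ (0.0005:ℝ) * (n:ℝ) := by
    have h1 : kA * ((0.0009:ℝ) * (n:ℝ)) ≤ kA * (b - 0.499*(n:ℝ)) := by
      apply mul_le_mul_of_nonneg_left _ hkA0
      linarith [hbge]
    nlinarith [hkA, h1, habn, he, mul_pos hnpos hnpos]
  have hkB' : kB ≤ (0.0005:ℝ) * (n:ℝ) := by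
    have h1 : kB * ((0.0009:ℝ) * (n:ℝ)) ≤ kB * (a - 0.499*(n:ℝ)) := by
      apply mul_le_mul_of_nonneg_left _ hkB0
      linarith [hage]
    nlinarith [hkB, h1, habn, he, mul_pos hnpos hnpos]
  -- T splits into the two sides
  have hTsplit : (T.filter (fun v => v ∈ A)).card + (T.filter (fun v => ¬ v ∈ A)).card = T.card :=
    Finset.card_filter_add_card_filter_not _
  have hTA : T.filter (fun v => v ∈ A) = Af.filter (fun v => ¬ p v) := by
    ext v
    simp only [hTdef, hAf, Finset.mem_filter, Finset.mem_univ, true_and]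
    tauto
  have hTB : T.filter (fun v => ¬ v ∈ A) = Bf.filter (fun v => ¬ p v) := by
    ext v
    simp only [hTdef, hBf, Finset.mem_filter, Finset.mem_univ, true_and]
    tauto
  set k : ℝ := (T.card : ℝ) with hkdef
  have hk : k = kA + kB := by
    rw [hkdef, ← hTsplit, hTA, hTB, hkAdef, hkBdef]
    push_cast
    ring
  have hkn : k ≤ (0.001:ℝ) * (n:ℝ) := by rw [hk]; linarith
  have hScard : (S.card : ℝ) = (n:ℝ) - k := by
    have h : ((S.card : ℕ) : ℝ) + ((T.card : ℕ) : ℝ) = ((n : ℕ) : ℝ) := by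
      exact_mod_cast hST
    rw [hkdef]; linarith
  refine ⟨S, ?_, ?_⟩
  · rw [hScard]; linarith
  · intro v hv
    have hvdeg : (0.499:ℝ)*(n:ℝ) ≤ (H.degree v : ℝ) := by
      rw [hSdef, Finset.mem_filter] at hv
      exact hv.2
    have hset : {u | u ∈ S ∧ H.Adj v u} = ↑(S.filter (fun u => H.Adj v u)) := by
      ext u; simp
    rw [hset, Set.ncard_coe_finset]
    have hsub : H.neighborFinset v ⊆ (S.filter (fun u => H.Adj v u)) ∪ T := by
      intro u hu
      rw [SimpleGraph.mem_neighborFinset] at hu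
      by_cases h : p u
      · exact Finset.mem_union_left _ (Finset.mem_filter.mpr
          ⟨by rw [hSdef]; exact Finset.mem_filter.mpr ⟨Finset.mem_univ u, h⟩, hu⟩)
      · exact Finset.mem_union_right _ (by rw [hTdef]; exact Finset.mem_filter.mpr ⟨Finset.mem_univ u, h⟩)
    have hcard : H.degree v ≤ (S.filter (fun u => H.Adj v u)).card + T.card := by
      calc H.degree v = (H.neighborFinset v).card := rfl
        _ ≤ ((S.filter (fun u => H.Adj v u)) ∪ T).card := Finset.card_le_card hsub
        _ ≤ _ := Finset.card_union_le _ _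
    have hcardR : (H.degree v : ℝ) ≤ ((S.filter (fun u => H.Adj v u)).card : ℝ) + k := by
      rw [hkdef]
      exact_mod_cast hcard
    linarith
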